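/- Let u be a nonconstant inner function. On H² ⊕ H²₋ define the block operator D̃(f, g) = (Sf + H_{u e₋₁}* g, Qg), where S : H² → H² is the unilateral shift Sf = e₁ · f, H_{u e₋₁}* : H²₋ → H² is the adjoint of the Hankel operator with symbol ζ ↦ u(ζ)ζ̄, and Q : H²₋ → H²₋ is Qg = P₋(e₁ · g). Then N(D̃) = {0} ⊕ span{e₋₁} if u(0) = 0, and N(D̃) = {0} if u(0) ≠ 0. -/

import Mathlib

open MeasureTheory Complex
open scoped InnerProductSpace ENNReal

noncomputable section

namespace DTTO

instance fact2pi : Fact (0 < 2 * Real.pi) := ⟨by positivity⟩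

/-- The circle, realized as `ℝ / 2πℤ`. -/
abbrev 𝕋c := AddCircle (2 * Real.pi)

/-- Normalized Haar (Lebesgue) measure on the circle. -/
abbrev μT : Measure 𝕋c := AddCircle.haarAddCircle

/-- `L²(𝕋)`. -/
abbrev L2 := Lp ℂ 2 μT

/-- `L∞(𝕋)`. -/
abbrev Linf := Lp ℂ ⊤ μT

lemma memL2_smul (φ : Linf) (f : L2) : MemLp (⇑φ • ⇑f) 2 μT :=
  (Lp.memLp f).smul (Lp.memLp φ)

/-- Multiplication operator `M_φ : L² → L²` by a function `φ ∈ L∞`. -/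
def Mmul (φ : Linf) : L2 →L[ℂ] L2 :=
  LinearMap.mkContinuous
    { toFun := fun f => (memL2_smul φ f).toLp _
      map_add' := fun f g => by
        refine Lp.ext ?_
        filter_upwards [MemLp.coeFn_toLp (memL2_smul φ (f + g)),
          MemLp.coeFn_toLp (memL2_smul φ f), MemLp.coeFn_toLp (memL2_smul φ g),
          Lp.coeFn_add f g,
          Lp.coeFn_add ((memL2_smul φ f).toLp _) ((memL2_smul φ g).toLp _)] with
            x h1 h2 h3 h4 h5
        rw [h1, h5]
        simp only [Pi.add_apply, h2, h3]
        simp only [Pi.smul_apply', h4, Pi.add_apply, smul_add]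
      map_smul' := fun c f => by
        refine Lp.ext ?_
        filter_upwards [MemLp.coeFn_toLp (memL2_smul φ (c • f)),
          MemLp.coeFn_toLp (memL2_smul φ f),
          Lp.coeFn_smul c f,
          Lp.coeFn_smul c ((memL2_smul φ f).toLp _)] with x h1 h2 h3 h4
        rw [h1, RingHom.id_apply, h4]
        simp only [Pi.smul_apply, Pi.smul_apply', h2, h3]
        exact smul_comm _ _ _ }
    ‖φ‖ (fun f => by
      simp only [LinearMap.coe_mk, AddHom.coe_mk]
      rw [Lp.norm_toLp, Lp.norm_def, Lp.norm_def]
      rw [← ENNReal.toReal_mul]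
      refine ENNReal.toReal_mono ?_ ?_
      · exact ENNReal.mul_ne_top (Lp.eLpNorm_ne_top φ) (Lp.eLpNorm_ne_top f)
      · exact eLpNorm_smul_le_eLpNorm_top_mul_eLpNorm 2 (Lp.aestronglyMeasurable f) ⇑φ)

/-- The canonical inclusion `L∞ ⊆ L²` (the measure is finite). -/
def toL2 (φ : Linf) : L2 := ((Lp.memLp φ).mono_exponent le_top).toLp _

/-- The Hardy space `H²`, the closed linear span in `L²` of the exponentials `e_n`, `n ≥ 0`. -/
def H2 : Submodule ℂ L2 :=
  (Submodule.span ℂ (Set.range fun n : ℕ => (fourierLp 2 (n : ℤ) : L2))).topologicalClosure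

instance : CompleteSpace H2 := (Submodule.isClosed_topologicalClosure _).completeSpace_coe

/-- `H²₋ = L² ⊖ H²`. -/
def Hminus : Submodule ℂ L2 := H2ᗮ

instance : CompleteSpace Hminus := (Submodule.isClosed_orthogonal _).completeSpace_coe

/-- `H∞ = H² ∩ L∞`. -/
def MemHinf (φ : Linf) : Prop := toL2 φ ∈ H2

/-- An inner function: an element of `H² ∩ L∞` of modulus one a.e. -/
structure IsInnerFn (u : Linf) : Prop where
  memH2 : MemHinf u
  unimod : ∀ᵐ z ∂μT, ‖u z‖ = 1

/-- `u` is nonconstant (not a.e. equal to a constant). -/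
def Nonconst (u : Linf) : Prop := ¬ ∃ c : ℂ, (⇑u : 𝕋c → ℂ) =ᵐ[μT] fun _ => c

/-- The subspace `uH²` of `L²`. -/
def uH2 (u : Linf) : Submodule ℂ L2 := H2.map (Mmul u).toLinearMap

/-- The model space `K_u = H² ⊖ uH² = H² ∩ (uH²)ᗮ`. -/
def Ku (u : Linf) : Submodule ℂ L2 := H2 ⊓ (uH2 u)ᗮ

lemma isClosed_Ku (u : Linf) : IsClosed ((Ku u : Set L2)) := by
  have h : (Ku u : Set L2) = (H2 : Set L2) ∩ ((uH2 u)ᗮ : Set L2) := rfl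
  rw [h]
  exact (Submodule.isClosed_topologicalClosure _).inter (Submodule.isClosed_orthogonal _)

instance (u : Linf) : CompleteSpace (Ku u) := (isClosed_Ku u).completeSpace_coe

/-- `K_u^⊥ = L² ⊖ K_u`. -/
def KuP (u : Linf) : Submodule ℂ L2 := (Ku u)ᗮ

instance (u : Linf) : CompleteSpace (KuP u) := (Submodule.isClosed_orthogonal _).completeSpace_coe

/-- Dual truncated Toeplitz operator `D_φ` on `K_u^⊥`. -/
def Dop (u φ : Linf) : KuP u →L[ℂ] KuP u :=
  Submodule.orthogonalProjectionOnto (KuP u) ∘L Mmul φ ∘L (KuP u).subtypeL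

/-- Truncated Toeplitz operator `A_φ` on `K_u`. -/
def Aop (u φ : Linf) : Ku u →L[ℂ] Ku u :=
  Submodule.orthogonalProjectionOnto (Ku u) ∘L Mmul φ ∘L (Ku u).subtypeL

/-- The operator `B_φ : K_u → K_u^⊥`, `B_φ f = (I - P_{K_u})(φ f)`. -/
def Bop (u φ : Linf) : Ku u →L[ℂ] KuP u :=
  Submodule.orthogonalProjectionOnto (KuP u) ∘L Mmul φ ∘L (Ku u).subtypeL

/-- Toeplitz operator `T_φ : H² → H²`. -/
def Top (φ : Linf) : H2 →L[ℂ] H2 :=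
  Submodule.orthogonalProjectionOnto H2 ∘L Mmul φ ∘L H2.subtypeL

/-- Hankel operator `H_φ : H² → H²₋`. -/
def Hop (φ : Linf) : H2 →L[ℂ] Hminus :=
  Submodule.orthogonalProjectionOnto Hminus ∘L Mmul φ ∘L H2.subtypeL

/-- The exponential `e₁(ζ) = ζ` as an element of `L∞`. -/
def e1 : Linf := fourierLp ⊤ 1

/-- The exponential `e₋₁(ζ) = ζ̄` as an element of `L∞`. -/
def eneg1 : Linf := fourierLp ⊤ (-1)

/-- The operator `Q : H²₋ → H²₋`, `Q g = P₋(e₁ g)`. -/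
def Qop : Hminus →L[ℂ] Hminus :=
  Submodule.orthogonalProjectionOnto Hminus ∘L Mmul e1 ∘L Hminus.subtypeL

/-- `u(0)`, the 0-th Fourier coefficient. -/
def coef0 (u : Linf) : ℂ := fourierCoeff (⇑u) 0

/-- Minimum modulus of a bounded operator. -/
def minMod {E F : Type*} [NormedAddCommGroup E] [NormedSpace ℂ E]
    [NormedAddCommGroup F] [NormedSpace ℂ F] (T : E →L[ℂ] F) : ℝ :=
  ⨅ x : {x : E // ‖x‖ = 1}, ‖T x.1‖

/-- Complex conjugation on `L∞`. -/
lemma memLinf_star (φ : Linf) : MemLp (fun z => (starRingEnd ℂ) (φ z)) ⊤ μT := by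
  refine ⟨continuous_star.comp_aestronglyMeasurable (Lp.aestronglyMeasurable φ), ?_⟩
  rw [eLpNorm_congr_norm_ae (g := ⇑φ) (Filter.Eventually.of_forall fun z => norm_star _)]
  exact Lp.eLpNorm_lt_top φ

/-- The complex conjugate `φ̄ ∈ L∞` of `φ ∈ L∞`. -/
def conjL (φ : Linf) : Linf := (memLinf_star φ).toLp _

lemma memLinf_mul (φ ψ : Linf) : MemLp (⇑φ • ⇑ψ) ⊤ μT :=
  (Lp.memLp ψ).smul (Lp.memLp φ)

/-- The pointwise product of two elements of `L∞`. -/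
def mulL (φ ψ : Linf) : Linf := (memLinf_mul φ ψ).toLp _

end DTTO

namespace DTTO

lemma inner_fourierLp_eq_zero {m n : ℤ} (h : m ≠ n) :
    (inner ℂ (fourierLp 2 m : L2) (fourierLp 2 n : L2) : ℂ) = 0 := by
  have hcoe := congrFun (coe_fourierBasis (T := 2 * Real.pi))
  have h2 := (fourierBasis (T := 2 * Real.pi)).orthonormal.2 (i := m) (j := n) h
  simpa only [hcoe] using h2

lemma span_le_orth_em1 :
    Submodule.span ℂ (Set.range fun n : ℕ => (fourierLp 2 (n : ℤ) : L2))
      ≤ (ℂ ∙ (fourierLp 2 (-1) : L2))ᗮ := by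
  rw [Submodule.span_le]
  rintro x ⟨n, rfl⟩
  rw [SetLike.mem_coe, Submodule.mem_orthogonal]
  intro w hw
  obtain ⟨c, rfl⟩ := Submodule.mem_span_singleton.1 hw
  rw [inner_smul_left, inner_fourierLp_eq_zero (by omega : (-1 : ℤ) ≠ (n : ℤ)), mul_zero]

lemma H2_le_orth_em1 : H2 ≤ (ℂ ∙ (fourierLp 2 (-1) : L2))ᗮ :=
  Submodule.topologicalClosure_minimal _ span_le_orth_em1 (Submodule.isClosed_orthogonal _)

/-- `e₋₁ ∈ H²₋`. -/
lemma em1_mem : (fourierLp 2 (-1) : L2) ∈ Hminus := by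
  unfold Hminus
  rw [Submodule.mem_orthogonal]
  intro v hv
  have h := H2_le_orth_em1 hv
  rw [Submodule.mem_orthogonal] at h
  exact inner_eq_zero_symm.mp (h _ (Submodule.mem_span_singleton_self _))

/-- `e₋₁` as an element of `H²₋`. -/
def em1 : Hminus := ⟨(fourierLp 2 (-1) : L2), em1_mem⟩

/-- For `f ∈ K_u`, the function `u f ∈ uH² ⊆ K_u^⊥`. -/
lemma mul_mem_KuP (u : Linf) (f : Ku u) : Mmul u (f : L2) ∈ KuP u := by
  unfold KuP
  rw [Submodule.mem_orthogonal]
  intro v hv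
  have hv2 : v ∈ (uH2 u)ᗮ := (Submodule.mem_inf.1 hv).2
  have hm : Mmul u (f : L2) ∈ uH2 u :=
    Submodule.mem_map_of_mem (Submodule.mem_inf.1 f.2).1
  rw [Submodule.mem_orthogonal] at hv2
  exact inner_eq_zero_symm.mp (hv2 _ hm)

lemma Ku_le_H2 (u : Linf) : Ku u ≤ H2 := inf_le_left

/-- The inclusion `K_u ⊆ H²` as a continuous linear map. -/
def KuIncl (u : Linf) : Ku u →L[ℂ] H2 :=
  LinearMap.mkContinuous (Submodule.inclusion (Ku_le_H2 u)) 1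
    (fun f => by rw [one_mul]; exact le_of_eq rfl)

end DTTO

namespace DTTO

lemma coeFn_Mmul (φ : Linf) (x : L2) : ⇑(Mmul φ x) =ᵐ[μT] ⇑φ • ⇑x :=
  (memL2_smul φ x).coeFn_toLp

lemma coeFn_mulL (φ ψ : Linf) : ⇑(mulL φ ψ) =ᵐ[μT] ⇑φ • ⇑ψ :=
  (memLinf_mul φ ψ).coeFn_toLp

lemma coeFn_e1 : ⇑e1 =ᵐ[μT] fourier 1 := coeFn_fourierLp ⊤ 1

lemma coeFn_eneg1 : ⇑eneg1 =ᵐ[μT] fourier (-1) := coeFn_fourierLp ⊤ (-1)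

lemma inner_L2 (f g : L2) : ⟪f, g⟫_ℂ = ∫ z, (starRingEnd ℂ) (f z) * g z ∂μT := by
  rw [MeasureTheory.L2.inner_def]
  simp only [RCLike.inner_apply]
  exact integral_congr_ae (Filter.Eventually.of_forall fun a => mul_comm _ _)

lemma inner_fourier (n : ℤ) (x : L2) :
    ⟪(fourierLp 2 n : L2), x⟫_ℂ = fourierCoeff (⇑x) n := by
  rw [← fourierBasis_repr, HilbertBasis.repr_apply_apply, coe_fourierBasis]

lemma fourierLp_mem_H2 (n : ℕ) : (fourierLp 2 (n : ℤ) : L2) ∈ H2 :=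
  Submodule.le_topologicalClosure _ (Submodule.subset_span ⟨n, rfl⟩)

lemma fourierLp_mem_H2' {n : ℤ} (hn : 0 ≤ n) : (fourierLp 2 n : L2) ∈ H2 := by
  lift n to ℕ using hn
  exact fourierLp_mem_H2 n

lemma H2_le_orth_neg {n : ℤ} (hn : n < 0) : H2 ≤ (ℂ ∙ (fourierLp 2 n : L2))ᗮ := by
  refine Submodule.topologicalClosure_minimal _ ?_ (Submodule.isClosed_orthogonal _)
  rw [Submodule.span_le]
  rintro x ⟨m, rfl⟩
  rw [SetLike.mem_coe, Submodule.mem_orthogonal]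
  intro w hw
  obtain ⟨c, rfl⟩ := Submodule.mem_span_singleton.1 hw
  rw [inner_smul_left, inner_fourierLp_eq_zero (by omega : n ≠ (m : ℤ)), mul_zero]

lemma coeff_zero_of_mem_H2 {x : L2} (hx : x ∈ H2) {n : ℤ} (hn : n < 0) :
    ⟪(fourierLp 2 n : L2), x⟫_ℂ = 0 := by
  have h := H2_le_orth_neg hn hx
  rw [Submodule.mem_orthogonal] at h
  exact h _ (Submodule.mem_span_singleton_self _)

lemma coeff_zero_of_mem_Hminus {x : L2} (hx : x ∈ Hminus) {n : ℤ} (hn : 0 ≤ n) :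
    ⟪(fourierLp 2 n : L2), x⟫_ℂ = 0 := by
  unfold Hminus at hx
  rw [Submodule.mem_orthogonal] at hx
  exact hx _ (fourierLp_mem_H2' hn)

lemma L2_eq_zero {x : L2} (h : ∀ n : ℤ, ⟪(fourierLp 2 n : L2), x⟫_ℂ = 0) : x = 0 := by
  have hr : (fourierBasis (T := 2 * Real.pi)).repr x = 0 := by
    ext n
    rw [HilbertBasis.repr_apply_apply, coe_fourierBasis]
    simpa using h n
  have := congrArg (fourierBasis (T := 2 * Real.pi)).repr.symm hr
  simpa using this

lemma inner_Mmul_e1 (n : ℤ) (x : L2) :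
    ⟪(fourierLp 2 n : L2), Mmul e1 x⟫_ℂ = ⟪(fourierLp 2 (n - 1) : L2), x⟫_ℂ := by
  rw [inner_L2, inner_L2]
  refine integral_congr_ae ?_
  filter_upwards [coeFn_Mmul e1 x, coeFn_fourierLp 2 n, coeFn_fourierLp 2 (n - 1),
    coeFn_e1] with z h1 h2 h3 h4
  rw [h1, h2, h3, Pi.smul_apply', h4, smul_eq_mul]
  simp only [← fourier_neg]
  rw [← mul_assoc, ← fourier_add, show (-n + 1 : ℤ) = -(n - 1) by ring]

lemma Mmul_fourierLp (k m : ℤ) :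
    Mmul (fourierLp ⊤ k) (fourierLp 2 m) = (fourierLp 2 (k + m) : L2) := by
  refine Lp.ext ?_
  filter_upwards [coeFn_Mmul (fourierLp ⊤ k) (fourierLp 2 m), coeFn_fourierLp ⊤ k,
    coeFn_fourierLp 2 m, coeFn_fourierLp 2 (k + m)] with z h1 h2 h3 h4
  rw [h1, h4, Pi.smul_apply', h2, h3, smul_eq_mul, ← fourier_add]

lemma fourierCoeff_congr {f g : 𝕋c → ℂ} (h : f =ᵐ[μT] g) (n : ℤ) :
    fourierCoeff f n = fourierCoeff g n := by
  unfold fourierCoeff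
  exact integral_congr_ae (h.mono fun z hz => by simp only []; rw [hz])

lemma fourierCoeff_u_neg {u : Linf} (hu : MemHinf u) {m : ℤ} (hm : m < 0) :
    fourierCoeff (⇑u) m = 0 := by
  have h1 : fourierCoeff (⇑u) m = fourierCoeff (⇑(toL2 u)) m :=
    (fourierCoeff_congr (MemLp.coeFn_toLp _) m).symm
  rw [h1, ← inner_fourier]
  exact coeff_zero_of_mem_H2 hu hm

lemma Hminus_orth : Hminusᗮ = H2 := by
  unfold Hminus
  exact Submodule.orthogonal_orthogonal H2

lemma Mmul_e1_mem_H2 {x : L2} (hx : x ∈ H2) : Mmul e1 x ∈ H2 := by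
  have h1 : Submodule.span ℂ (Set.range fun n : ℕ => (fourierLp 2 (n : ℤ) : L2))
      ≤ H2.comap (Mmul e1).toLinearMap := by
    rw [Submodule.span_le]
    rintro y ⟨m, rfl⟩
    simp only [SetLike.mem_coe, Submodule.mem_comap, ContinuousLinearMap.coe_coe]
    have he : Mmul e1 (fourierLp 2 (m : ℤ)) = (fourierLp 2 ((m + 1 : ℕ) : ℤ) : L2) := by
      rw [show (e1 : Linf) = fourierLp ⊤ 1 from rfl, Mmul_fourierLp]
      norm_num [add_comm]
    rw [he]
    exact fourierLp_mem_H2 (m + 1)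
  have h2 : H2 ≤ H2.comap (Mmul e1).toLinearMap :=
    Submodule.topologicalClosure_minimal _ h1
      (IsClosed.preimage (Mmul e1).continuous (Submodule.isClosed_topologicalClosure _))
  exact h2 hx

lemma Top_e1_coe (f : H2) : ((Top e1 f : H2) : L2) = Mmul e1 (f : L2) := by
  exact Submodule.starProjection_eq_self_iff.mpr (Mmul_e1_mem_H2 f.2)

lemma Qop_em1 : Qop em1 = 0 := by
  have h : Mmul e1 ((em1 : Hminus) : L2) = (fourierLp 2 (0 : ℤ) : L2) := by
    rw [show ((em1 : Hminus) : L2) = (fourierLp 2 (-1) : L2) from rfl,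
      show (e1 : Linf) = fourierLp ⊤ 1 from rfl, Mmul_fourierLp]
    norm_num
  have h0 : (fourierLp 2 (0 : ℤ) : L2) ∈ Hminusᗮ := by
    rw [Hminus_orth]; exact fourierLp_mem_H2 0
  show Submodule.orthogonalProjectionOnto Hminus (Mmul e1 ((em1 : Hminus) : L2)) = 0
  rw [h]
  exact Submodule.orthogonalProjectionOnto_apply_of_mem_orthogonal h0

lemma inner_fourierLp_self (n : ℤ) :
    ⟪(fourierLp 2 n : L2), (fourierLp 2 n : L2)⟫_ℂ = 1 := by
  have h := (fourierBasis (T := 2 * Real.pi)).orthonormal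
  rw [orthonormal_iff_ite] at h
  have h2 := h n n
  rw [if_pos rfl] at h2
  rw [show (fourierLp 2 n : L2) = fourierBasis n from (congrFun coe_fourierBasis n).symm]
  exact h2

lemma inner_adjoint_em1 (u : Linf) (n : ℕ) :
    ⟪(fourierLp 2 (n : ℤ) : L2),
      ((ContinuousLinearMap.adjoint (Hop (mulL u eneg1)) em1 : H2) : L2)⟫_ℂ
      = (starRingEnd ℂ) (fourierCoeff (⇑u) (-(n : ℤ))) := by
  set φ : Linf := mulL u eneg1 with hφ
  set enh : H2 := ⟨(fourierLp 2 (n : ℤ) : L2), fourierLp_mem_H2 n⟩ with henh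
  have h1 : ⟪(fourierLp 2 (n : ℤ) : L2),
      ((ContinuousLinearMap.adjoint (Hop φ) em1 : H2) : L2)⟫_ℂ
      = ⟪enh, ContinuousLinearMap.adjoint (Hop φ) em1⟫_ℂ := rfl
  rw [h1, ContinuousLinearMap.adjoint_inner_right]
  have h2 : ⟪Hop φ enh, em1⟫_ℂ = ⟪Mmul φ (enh : L2), ((em1 : Hminus) : L2)⟫_ℂ :=
    Submodule.inner_orthogonalProjectionOnto_eq_of_mem_right (K := Hminus) em1 (Mmul φ (enh : L2))
  rw [h2, inner_L2]
  unfold fourierCoeff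
  rw [← integral_conj]
  refine integral_congr_ae ?_
  filter_upwards [coeFn_Mmul φ (enh : L2), coeFn_mulL u eneg1,
    coeFn_fourierLp 2 (n : ℤ), coeFn_fourierLp 2 (-1), coeFn_eneg1] with z g1 g2 g3 g4 g5
  have he : ((enh : L2) : 𝕋c → ℂ) z = fourier (n : ℤ) z := g3
  have hm : (((em1 : Hminus) : L2) : 𝕋c → ℂ) z = fourier (-1) z := g4
  rw [g1, Pi.smul_apply', g2, Pi.smul_apply', g5, he, hm]
  simp only [smul_eq_mul, map_mul, neg_neg]
  have hone : (starRingEnd ℂ) ((fourier (-1 : ℤ)) z) * (fourier (-1 : ℤ)) z = 1 := by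
    rw [← fourier_neg, ← fourier_add]
    norm_num
  linear_combination ((starRingEnd ℂ) (u z) * (starRingEnd ℂ) ((fourier (n : ℤ)) z)) * hone

lemma coeff_adjoint_all (u : Linf) (hu : MemHinf u) (n : ℤ) :
    ⟪(fourierLp 2 n : L2),
      ((ContinuousLinearMap.adjoint (Hop (mulL u eneg1)) em1 : H2) : L2)⟫_ℂ
      = if n = 0 then (starRingEnd ℂ) (coef0 u) else 0 := by
  rcases lt_or_ge n 0 with hn | hn
  · rw [if_neg hn.ne, coeff_zero_of_mem_H2 (Submodule.coe_mem _) hn]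
  · lift n to ℕ using hn
    rw [inner_adjoint_em1]
    rcases eq_or_ne (n : ℤ) 0 with h | h
    · rw [if_pos h, h, neg_zero]
      rfl
    · rw [if_neg h, fourierCoeff_u_neg hu (by omega), map_zero]

lemma adjoint_em1_eq_zero {u : Linf} (hu : MemHinf u) (h0 : coef0 u = 0) :
    ContinuousLinearMap.adjoint (Hop (mulL u eneg1)) em1 = 0 := by
  rw [← Submodule.coe_eq_zero]
  apply L2_eq_zero
  intro n
  rw [coeff_adjoint_all u hu n, h0, map_zero, ite_self]

lemma Mmul_e1_inj {x : L2} (h : Mmul e1 x = 0) : x = 0 := by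
  apply L2_eq_zero
  intro n
  have h2 := inner_Mmul_e1 (n + 1) x
  simp only [add_sub_cancel_right] at h2
  rw [← h2, h, inner_zero_right]

lemma eq_smul_em1_of_Q_zero {g : Hminus} (hg : Qop g = 0) :
    g = (⟪(fourierLp 2 (-1) : L2), (g : L2)⟫_ℂ) • em1 := by
  set c := ⟪(fourierLp 2 (-1) : L2), (g : L2)⟫_ℂ with hc
  have hmem : Mmul e1 (g : L2) ∈ H2 := by
    have h : Submodule.orthogonalProjectionOnto Hminus (Mmul e1 (g : L2)) = 0 := hg
    rw [Submodule.orthogonalProjectionOnto_eq_zero_iff] at h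
    rwa [Hminus_orth] at h
  apply Subtype.ext
  have hz : ((g : L2) - c • (fourierLp 2 (-1) : L2)) = 0 := by
    apply L2_eq_zero
    intro n
    rw [inner_sub_right, inner_smul_right]
    rcases lt_trichotomy n (-1) with hn | hn | hn
    · have h2 := inner_Mmul_e1 (n + 1) (g : L2)
      simp only [add_sub_cancel_right] at h2
      rw [← h2, coeff_zero_of_mem_H2 hmem (by omega),
        inner_fourierLp_eq_zero (by omega : n ≠ -1), mul_zero, sub_zero]
    · subst hn
      rw [inner_fourierLp_self, mul_one, ← hc, sub_self]
    · rw [coeff_zero_of_mem_Hminus (Submodule.coe_mem g) (by omega),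
        inner_fourierLp_eq_zero (by omega : n ≠ -1), mul_zero, sub_zero]
  have := sub_eq_zero.mp hz
  rw [this]
  rfl


/-- The block operator `D̃(f, g) = (S f + H_{u e₋₁}* g, Q g)` on `H² ⊕ H²₋`. -/
def Dtilde (u : Linf) : (H2 × Hminus) →L[ℂ] (H2 × Hminus) :=
  ((Top e1 ∘L ContinuousLinearMap.fst ℂ H2 Hminus)
      + (ContinuousLinearMap.adjoint (Hop (mulL u eneg1))
          ∘L ContinuousLinearMap.snd ℂ H2 Hminus)).prod
    (Qop ∘L ContinuousLinearMap.snd ℂ H2 Hminus)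

/-- `N(D̃) = {0} ⊕ span{e₋₁}` if `u(0) = 0`, and `N(D̃) = {0}` if `u(0) ≠ 0`. -/
theorem kernel_Dtilde (u : Linf) (hu : IsInnerFn u) (hnc : Nonconst u) :
    (coef0 u = 0 →
      LinearMap.ker (Dtilde u : (H2 × Hminus) →ₗ[ℂ] (H2 × Hminus)) = Submodule.prod ⊥ (Submodule.span ℂ {em1}))
    ∧ (coef0 u ≠ 0 → LinearMap.ker (Dtilde u : (H2 × Hminus) →ₗ[ℂ] (H2 × Hminus)) = ⊥) := by
  set A := ContinuousLinearMap.adjoint (Hop (mulL u eneg1)) with hA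
  have hDfst : ∀ p : H2 × Hminus, (Dtilde u p).1 = Top e1 p.1 + A p.2 := fun p => rfl
  have hDsnd : ∀ p : H2 × Hminus, (Dtilde u p).2 = Qop p.2 := fun p => rfl
  constructor
  · intro h0
    have hAem1 : A em1 = 0 := adjoint_em1_eq_zero hu.memH2 h0
    apply le_antisymm
    · intro p hp
      rw [LinearMap.mem_ker, ContinuousLinearMap.coe_coe] at hp
      have h1 : Top e1 p.1 + A p.2 = 0 := by rw [← hDfst p, hp]; rfl
      have h2 : Qop p.2 = 0 := by rw [← hDsnd p, hp]; rfl
      have hg := eq_smul_em1_of_Q_zero h2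
      have hAz : A p.2 = 0 := by rw [hg, _root_.map_smul, hAem1, smul_zero]
      rw [hAz, add_zero] at h1
      have hf : ((Top e1 p.1 : H2) : L2) = 0 := by rw [h1]; rfl
      rw [Top_e1_coe] at hf
      have hp1 : p.1 = 0 := Submodule.coe_eq_zero.mp (Mmul_e1_inj hf)
      rw [Submodule.mem_prod]
      exact ⟨(Submodule.mem_bot ℂ).mpr hp1,
        hg ▸ Submodule.smul_mem _ _ (Submodule.mem_span_singleton_self _)⟩
    · intro p hp
      rw [Submodule.mem_prod] at hp
      obtain ⟨h1, h2⟩ := hp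
      rw [Submodule.mem_bot] at h1
      obtain ⟨a, ha⟩ := Submodule.mem_span_singleton.1 h2
      rw [LinearMap.mem_ker, ContinuousLinearMap.coe_coe]
      refine Prod.ext_iff.mpr ⟨?_, ?_⟩
      · rw [hDfst, h1, ← ha, map_zero, _root_.map_smul, hAem1, smul_zero, add_zero]
        rfl
      · rw [hDsnd, ← ha, _root_.map_smul, Qop_em1, smul_zero]
        rfl
  · intro h0
    rw [Submodule.eq_bot_iff]
    intro p hp
    rw [LinearMap.mem_ker, ContinuousLinearMap.coe_coe] at hp
    have h1 : Top e1 p.1 + A p.2 = 0 := by rw [← hDfst p, hp]; rfl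
    have h2 : Qop p.2 = 0 := by rw [← hDsnd p, hp]; rfl
    have hg := eq_smul_em1_of_Q_zero h2
    set c := ⟪(fourierLp 2 (-1) : L2), ((p.2 : Hminus) : L2)⟫_ℂ with hc
    have hA2 : A p.2 = c • A em1 := by rw [hg, _root_.map_smul]
    have hco : ((Top e1 p.1 + A p.2 : H2) : L2) = 0 := by rw [h1]; rfl
    rw [Submodule.coe_add, Top_e1_coe, hA2, Submodule.coe_smul] at hco
    have key := congrArg (fun x : L2 => ⟪(fourierLp 2 (0 : ℤ) : L2), x⟫_ℂ) hco
    simp only [inner_add_right, inner_smul_right, inner_zero_right] at key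
    have hsh := inner_Mmul_e1 0 (p.1 : L2)
    norm_num at hsh
    rw [hsh, coeff_zero_of_mem_H2 (Submodule.coe_mem p.1) (by norm_num),
      coeff_adjoint_all u hu.memH2 0, if_pos rfl, zero_add] at key
    have hc0 : c = 0 := by
      rcases mul_eq_zero.mp key with h | h
      · exact h
      · exact absurd (by simpa using congrArg (starRingEnd ℂ) h) h0
    have hp2 : p.2 = 0 := by rw [hg, hc0, zero_smul]
    rw [hc0, zero_smul, add_zero] at hco
    have hp1 : p.1 = 0 := Submodule.coe_eq_zero.mp (Mmul_e1_inj hco)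
    exact Prod.ext_iff.mpr ⟨hp1, hp2⟩

end DTTO
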